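/- (Theorem A) For every integer n ≥ 1 and every odd prime p, there exists a finite p-group G, nilpotent of class exactly n, such that for every automorphism φ of G the set [G,φ] = {g⁻¹ φ(g) | g ∈ G} is a subgroup of G. -/

import Mathlib

set_option linter.unusedSectionVars false

namespace ThmA

variable (p : ℕ) [hpf : Fact p.Prime] [hof : Fact (Odd p)]

instance (k : ℕ) : NeZero (p ^ k) := ⟨pow_ne_zero _ hpf.out.ne_zero⟩

/-- Exact LTE statement for `(1+p)^k` over ℕ. -/
lemma one_add_p_pow (k : ℕ) (hk : k ≠ 0) :
    ∃ c : ℕ, ¬ p ∣ c ∧ (1+p)^k = 1 + p^(1 + padicValNat p k) * c := by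
  have hp := hpf.out
  have hp1 : 1 < p := hp.one_lt
  have hnd : ¬ p ∣ 1 + p := by
    intro h
    have : p ∣ 1 := (Nat.dvd_add_right (dvd_refl p)).mp (by rwa [Nat.add_comm] at h)
    exact Nat.Prime.one_lt hp |>.ne' (Nat.eq_one_of_dvd_one this ▸ rfl)
  have hval : padicValNat p ((1+p)^k - 1^k) = padicValNat p ((1+p) - 1) + padicValNat p k :=
    padicValNat.pow_sub_pow hof.out (by omega) (by simp) hnd hk
  have hv1 : padicValNat p ((1+p) - 1) = 1 := by
    simp [padicValNat.self hp1]
  have hM1 : 1 < (1+p)^k := Nat.one_lt_pow hk (by omega)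
  set M := (1+p)^k - 1 with hM
  have hMne : M ≠ 0 := by omega
  have hvalM : padicValNat p M = 1 + padicValNat p k := by
    rw [hM]; rw [one_pow] at hval; omega
  have hdvd : p^(1 + padicValNat p k) ∣ M := by
    rw [← hvalM]; exact pow_padicValNat_dvd
  obtain ⟨c, hc⟩ := hdvd
  refine ⟨c, ?_, by omega⟩
  intro hpc
  obtain ⟨d, hd⟩ := hpc
  have : p ^ (1 + padicValNat p k + 1) ∣ M := ⟨d, by rw [hc, hd]; ring⟩
  have hle := (Nat.Prime.pow_dvd_iff_le_factorization hp hMne).mp this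
  rw [Nat.factorization_def _ hp, hvalM] at hle
  omega


variable (n : ℕ)

/-- The scalar `u = 1 + p` in `ZMod (p^n)`. -/
def uu : ZMod (p^n) := 1 + p

lemma uu_cast : uu p n = ((1 + p : ℕ) : ZMod (p^n)) := by
  simp only [uu, Nat.cast_add, Nat.cast_one]

lemma isUnit_of_not_dvd {c : ℕ} (hc : ¬ p ∣ c) : IsUnit (c : ZMod (p^n)) := by
  rw [ZMod.isUnit_iff_coprime]
  exact Nat.Coprime.pow_right _ ((hpf.out.coprime_iff_not_dvd).2 hc).symm

lemma uu_pow_eq_one_of_dvd {k : ℕ} (hk : k ≠ 0) (hv : n ≤ 1 + padicValNat p k) :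
    (uu p n)^k = 1 := by
  obtain ⟨c, _, hc⟩ := one_add_p_pow p k hk
  rw [uu_cast, ← Nat.cast_pow, hc]
  push_cast
  have h0 : ((p:ZMod (p^n))^(1 + padicValNat p k)) = 0 := by
    have hn0 : ((p:ZMod (p^n))^n) = 0 := by
      rw [← Nat.cast_pow, ZMod.natCast_eq_zero_iff]
    calc ((p:ZMod (p^n))^(1 + padicValNat p k))
        = (p:ZMod (p^n))^n * (p:ZMod (p^n))^(1 + padicValNat p k - n) := by
          rw [← pow_add]; congr 1; omega
      _ = 0 := by rw [hn0, zero_mul]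
  rw [h0, zero_mul, add_zero]

lemma uu_pow_card : (uu p n)^(p^(n-1)) = 1 := by
  apply uu_pow_eq_one_of_dvd p n (NeZero.ne _)
  rw [padicValNat.prime_pow]
  omega

lemma uu_isUnit : IsUnit (uu p n) := by
  apply IsUnit.of_mul_eq_one ((uu p n)^(p^(n-1) - 1))
  have h : uu p n * (uu p n)^(p^(n-1) - 1) = (uu p n)^(p^(n-1)) := by
    rw [← pow_succ']
    congr 1
    have : 0 < p^(n-1) := Nat.pow_pos hpf.out.pos
    omega
  rw [h, uu_pow_card]

lemma uu_pow_mod (k : ℕ) : (uu p n)^k = (uu p n)^(k % p^(n-1)) := by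
  conv_lhs => rw [← Nat.div_add_mod k (p^(n-1))]
  rw [pow_add, pow_mul, uu_pow_card, one_pow, one_mul]

/-- Exact valuation of `u^k - 1`. -/
lemma uu_sub_one (k : ℕ) (hk : k ≠ 0) :
    ∃ w : ZMod (p^n), IsUnit w ∧
      (uu p n)^k - 1 = (p : ZMod (p^n))^(1 + padicValNat p k) * w := by
  obtain ⟨c, hc, hce⟩ := one_add_p_pow p k hk
  refine ⟨(c : ZMod (p^n)), isUnit_of_not_dvd p n hc, ?_⟩
  rw [uu_cast, ← Nat.cast_pow, hce]
  push_cast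
  ring

lemma uu_pow_inj {a b : ℕ} (hn : 1 ≤ n) (h : (uu p n)^a = (uu p n)^b) :
    a ≡ b [MOD p^(n-1)] := by
  have hp1 : 1 < p := hpf.out.one_lt
  suffices key : ∀ a b : ℕ, b ≤ a → (uu p n)^a = (uu p n)^b → a ≡ b [MOD p^(n-1)] by
    rcases le_total b a with hba | hba
    · exact key a b hba h
    · exact (key b a hba h.symm).symm
  intro a b hba h
  rcases Nat.eq_or_lt_of_le hba with rfl | hlt
  · rfl
  have hd : a - b ≠ 0 := by omega
  have hu := uu_isUnit p n
  have h1 : (uu p n)^(a - b) = 1 := by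
    have h2 : (uu p n)^b * (uu p n)^(a-b) = (uu p n)^b * 1 := by
      rw [mul_one, ← pow_add]
      rw [← h]; congr 1; omega
    exact (hu.pow b).mul_left_cancel h2
  obtain ⟨c, hc, hce⟩ := one_add_p_pow p (a - b) hd
  have hcast : ((1 + p^(1 + padicValNat p (a-b)) * c : ℕ) : ZMod (p^n)) = 1 := by
    rw [← hce, Nat.cast_pow, ← uu_cast p n]
    exact h1
  have hz : ((p^(1 + padicValNat p (a-b)) * c : ℕ) : ZMod (p^n)) = 0 := by
    push_cast at hcast ⊢
    linear_combination hcast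
  rw [ZMod.natCast_eq_zero_iff] at hz
  have hcop : Nat.Coprime (p^n) c :=
    Nat.Coprime.pow_left _ ((hpf.out.coprime_iff_not_dvd).2 hc)
  have hdvd : p^n ∣ p^(1 + padicValNat p (a-b)) := hcop.dvd_of_dvd_mul_right hz
  have hle : n ≤ 1 + padicValNat p (a-b) := (Nat.pow_dvd_pow_iff_le_right hp1).mp hdvd
  have hdvd2 : p^(n-1) ∣ a - b := by
    calc p^(n-1) ∣ p^(padicValNat p (a-b)) := pow_dvd_pow p (by omega)
      _ ∣ a - b := pow_padicValNat_dvd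
  exact ((Nat.modEq_iff_dvd' hba).mpr hdvd2).symm

/-- cancel `p` in a congruence mod `p^n`. -/
lemma p_cancel {a b : ℕ} (hn : 1 ≤ n) (h : (p*a : ℕ) ≡ (p*b : ℕ) [MOD p^n]) :
    a ≡ b [MOD p^(n-1)] := by
  have hp1 : 1 < p := hpf.out.one_lt
  suffices key : ∀ a b : ℕ, a ≤ b → ((p*a : ℕ) ≡ (p*b : ℕ) [MOD p^n]) →
      a ≡ b [MOD p^(n-1)] by
    rcases le_total a b with hab | hab
    · exact key a b hab h
    · exact (key b a hab h.symm).symm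
  intro a b hab h
  have hdvd := (Nat.modEq_iff_dvd' (Nat.mul_le_mul_left p hab)).mp h
  rw [← Nat.mul_sub] at hdvd
  have hpn : p^n = p * p^(n-1) := by rw [← pow_succ']; congr 1; omega
  rw [hpn] at hdvd
  obtain ⟨t, ht⟩ := hdvd
  have hba : b - a = p^(n-1) * t := by
    apply Nat.eq_of_mul_eq_mul_left (show 0 < p by omega)
    rw [ht]; ring
  exact (Nat.modEq_iff_dvd' hab).mpr ⟨t, hba⟩

lemma p_mul_mod {a b : ℕ} (h : a ≡ b [MOD p^(n-1)]) :
    ((p * a : ℕ) : ZMod (p^n)) = ((p * b : ℕ) : ZMod (p^n)) := by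
  rcases Nat.eq_zero_or_pos n with rfl | hn
  · haveI : Subsingleton (ZMod (p ^ 0)) := by rw [pow_zero]; infer_instance
    exact Subsingleton.elim _ _
  have h2 : (p*a : ℕ) ≡ (p*b : ℕ) [MOD p^n] := by
    have h3 := h.mul_left' (c := p)
    have hpn : p * p^(n-1) = p^n := by rw [← pow_succ']; congr 1; omega
    rwa [hpn] at h3
  exact (ZMod.natCast_eq_natCast_iff _ _ _).mpr h2

/-- surjectivity of `j ↦ u^j` onto `1 + p·ZMod (p^n)`. -/
lemma uu_surj (hn : 1 ≤ n) (x : ZMod (p^n)) :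
    ∃ j : ℕ, (uu p n)^j = 1 + p * x := by
  classical
  have hp1 : 1 < p := hpf.out.one_lt
  set m := p^(n-1) with hm
  set f : ZMod m → ZMod (p^n) := fun j => (uu p n)^j.val with hf
  set g : ZMod m → ZMod (p^n) := fun j => 1 + ((p * j.val : ℕ) : ZMod (p^n)) with hg
  have hfinj : Function.Injective f := by
    intro a b hab
    have hmod := uu_pow_inj p n hn hab
    exact ZMod.val_injective _ (Nat.ModEq.eq_of_lt_of_lt hmod (ZMod.val_lt a) (ZMod.val_lt b))
  have hginj : Function.Injective g := by
    intro a b hab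
    have hab' : ((p * a.val : ℕ) : ZMod (p^n)) = ((p * b.val : ℕ) : ZMod (p^n)) := by
      simp only [hg] at hab
      linear_combination hab
    have hmod : a.val ≡ b.val [MOD p^(n-1)] :=
      p_cancel p n hn ((ZMod.natCast_eq_natCast_iff _ _ _).mp hab')
    exact ZMod.val_injective _ (Nat.ModEq.eq_of_lt_of_lt hmod (ZMod.val_lt a) (ZMod.val_lt b))
  -- each u^(j.val) lies in the image of g
  have hsub : (Finset.univ.image f) ⊆ (Finset.univ.image g) := by
    intro y hy
    rw [Finset.mem_image] at hy ⊢
    obtain ⟨j, _, rfl⟩ := hy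
    -- (1+p)^(j.val) = 1 + p * c
    have hex : ∀ k : ℕ, ∃ c : ℕ, (1+p)^k = 1 + p * c := by
      intro k
      induction k with
      | zero => exact ⟨0, by ring⟩
      | succ k ih =>
        obtain ⟨c, hc⟩ := ih
        exact ⟨c + (1 + p*c), by rw [pow_succ, hc]; ring⟩
    obtain ⟨c, hc⟩ := hex j.val
    refine ⟨(c : ZMod m), Finset.mem_univ _, ?_⟩
    have hcc : ((c : ZMod m)).val ≡ c [MOD p^(n-1)] := by
      rw [ZMod.val_natCast]
      exact (Nat.mod_modEq c m)
    simp only [hg, hf]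
    rw [p_mul_mod p n hcc]
    rw [uu_cast, ← Nat.cast_pow, hc]
    push_cast
    ring
  have hcards : (Finset.univ.image g).card ≤ (Finset.univ.image f).card := by
    rw [Finset.card_image_of_injective _ hfinj, Finset.card_image_of_injective _ hginj]
  have heq : (Finset.univ.image f) = (Finset.univ.image g) :=
    Finset.eq_of_subset_of_card_le hsub hcards
  -- now 1 + p * x is in the image of g
  have hx : 1 + p * x ∈ Finset.univ.image g := by
    rw [Finset.mem_image]
    refine ⟨((x.val : ZMod m)), Finset.mem_univ _, ?_⟩
    have hcc : ((x.val : ZMod m)).val ≡ x.val [MOD p^(n-1)] := by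
      rw [ZMod.val_natCast]
      exact (Nat.mod_modEq _ m)
    simp only [hg]
    rw [p_mul_mod p n hcc]
    push_cast
    rw [ZMod.natCast_val, ZMod.cast_id]
  rw [← heq, Finset.mem_image] at hx
  obtain ⟨j, _, hj⟩ := hx
  exact ⟨j.val, hj⟩

/-- if `p^(n-1) * x = 0` in `ZMod (p^n)` then `x` is divisible by `p`. -/
lemma p_divides {x : ZMod (p^n)} (hn : 1 ≤ n)
    (h : ((p^(n-1) : ℕ) : ZMod (p^n)) * x = 0) : ∃ y : ZMod (p^n), x = p * y := by
  have hval : x = ((x.val : ℕ) : ZMod (p^n)) := by rw [ZMod.natCast_val, ZMod.cast_id]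
  rw [hval, ← Nat.cast_mul, ZMod.natCast_eq_zero_iff] at h
  have hpn : p^n = p^(n-1) * p := by rw [← pow_succ]; congr 1; omega
  have hd : p ∣ x.val := by
    obtain ⟨t, ht⟩ := h
    have ht2 : p^(n-1) * x.val = (p^(n-1) * p) * t := by rw [← hpn]; exact ht
    have h0 : 0 < p^(n-1) := Nat.pow_pos hpf.out.pos
    have : x.val = p * t := by
      apply Nat.eq_of_mul_eq_mul_left h0
      rw [ht2]; ring
    exact ⟨t, this⟩
  obtain ⟨y, hy⟩ := hd
  exact ⟨(y : ZMod (p^n)), by rw [hval, hy]; push_cast; ring⟩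

/-- a non-unit of `ZMod (p^n)` is divisible by `p`. -/
lemma not_unit_divides {x : ZMod (p^n)} (h : ¬ IsUnit x) : ∃ y : ZMod (p^n), x = p * y := by
  have hval : x = ((x.val : ℕ) : ZMod (p^n)) := by rw [ZMod.natCast_val, ZMod.cast_id]
  have hd : p ∣ x.val := by
    by_contra hnd
    exact h (hval ▸ isUnit_of_not_dvd p n hnd)
  obtain ⟨y, hy⟩ := hd
  exact ⟨(y : ZMod (p^n)), by rw [hval, hy]; push_cast; ring⟩

/-- cardinality of an annihilator: `#{x : p^v * x = 0} ≤ p^v`. -/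
lemma card_ann (v : ℕ) :
    Nat.card {x : ZMod (p^n) // ((p^v : ℕ) : ZMod (p^n)) * x = 0} ≤ p^v := by
  have hp1 : 1 < p := hpf.out.one_lt
  rcases le_or_gt n v with hnv | hvn
  · calc Nat.card {x : ZMod (p^n) // ((p^v : ℕ) : ZMod (p^n)) * x = 0}
        ≤ Nat.card (ZMod (p^n)) := Nat.card_le_card_of_injective _ Subtype.val_injective
      _ = p^n := Nat.card_zmod _
      _ ≤ p^v := Nat.pow_le_pow_right (by omega) hnv
  · have hpv : 0 < p^(n-v) := Nat.pow_pos hpf.out.pos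
    set F : {x : ZMod (p^n) // ((p^v : ℕ) : ZMod (p^n)) * x = 0} → Fin (p^v) :=
      fun x => ⟨x.1.val / p^(n-v), by
        apply Nat.div_lt_of_lt_mul
        calc x.1.val < p^n := ZMod.val_lt _
          _ = p^(n-v) * p^v := by rw [← pow_add]; congr 1; omega⟩ with hF
    have hdvd : ∀ x : {x : ZMod (p^n) // ((p^v : ℕ) : ZMod (p^n)) * x = 0},
        p^(n-v) ∣ x.1.val := by
      rintro ⟨x, hx⟩
      show p^(n-v) ∣ x.val
      have hval : x = ((x.val : ℕ) : ZMod (p^n)) := by rw [ZMod.natCast_val, ZMod.cast_id]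
      rw [hval, ← Nat.cast_mul, ZMod.natCast_eq_zero_iff] at hx
      have hpn : p^n = p^v * p^(n-v) := by rw [← pow_add]; congr 1; omega
      obtain ⟨t, ht⟩ := hx
      have ht2 : p^v * x.val = (p^v * p^(n-v)) * t := by rw [← hpn]; exact ht
      refine ⟨t, ?_⟩
      apply Nat.eq_of_mul_eq_mul_left (show 0 < p^v from Nat.pow_pos hpf.out.pos)
      rw [ht2]; ring
    have hFinj : Function.Injective F := by
      intro x y hxy
      have hx := hdvd x
      have hy := hdvd y
      have : x.1.val = y.1.val := by
        have h1 := Nat.div_mul_cancel hx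
        have h2 := Nat.div_mul_cancel hy
        have h3 : x.1.val / p^(n-v) = y.1.val / p^(n-v) := by
          simpa [hF, Fin.ext_iff] using hxy
        rw [← h1, ← h2, h3]
      exact Subtype.ext (ZMod.val_injective _ this)
    calc Nat.card {x : ZMod (p^n) // ((p^v : ℕ) : ZMod (p^n)) * x = 0}
        ≤ Nat.card (Fin (p^v)) := Nat.card_le_card_of_injective F hFinj
      _ = p^v := by simp


/-- The group `(ZMod (p^n))² ⋊ ZMod (p^(n-1))`, generator acting by `1+p`. -/
@[ext] structure Gr (p n : ℕ) : Type where
  a : ZMod (p^n) × ZMod (p^n)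
  i : ZMod (p^(n-1))

/-- The scalar by which `t^i` acts. -/
def UU (i : ZMod (p^(n-1))) : ZMod (p^n) := (uu p n)^(i.val)

lemma UU_natCast (k : ℕ) : UU p n (k : ZMod (p^(n-1))) = (uu p n)^k := by
  rw [UU, ZMod.val_natCast, ← uu_pow_mod]

lemma UU_zero : UU p n 0 = 1 := by
  have : ((0:ℕ) : ZMod (p^(n-1))) = 0 := by push_cast; rfl
  rw [← this, UU_natCast, pow_zero]

lemma UU_add (i j : ZMod (p^(n-1))) : UU p n (i + j) = UU p n i * UU p n j := by
  have hi : ((i.val : ℕ) : ZMod (p^(n-1))) = i := ZMod.natCast_rightInverse i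
  have hj : ((j.val : ℕ) : ZMod (p^(n-1))) = j := ZMod.natCast_rightInverse j
  rw [← hi, ← hj, ← Nat.cast_add, UU_natCast, UU_natCast, UU_natCast, pow_add]

lemma UU_neg_mul (i : ZMod (p^(n-1))) : UU p n (-i) * UU p n i = 1 := by
  rw [← UU_add, neg_add_cancel, UU_zero]

lemma UU_one : UU p n 1 = uu p n := by
  have : ((1:ℕ) : ZMod (p^(n-1))) = 1 := by push_cast; rfl
  rw [← this, UU_natCast, pow_one]

instance : Mul (Gr p n) := ⟨fun g h => ⟨g.a + UU p n g.i • h.a, g.i + h.i⟩⟩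
instance : One (Gr p n) := ⟨⟨0, 0⟩⟩
instance : Inv (Gr p n) := ⟨fun g => ⟨-(UU p n (-g.i) • g.a), -g.i⟩⟩

lemma mul_a (g h : Gr p n) : (g * h).a = g.a + UU p n g.i • h.a := rfl
lemma mul_i (g h : Gr p n) : (g * h).i = g.i + h.i := rfl
lemma one_a : (1 : Gr p n).a = 0 := rfl
lemma one_i : (1 : Gr p n).i = 0 := rfl
lemma inv_a (g : Gr p n) : (g⁻¹).a = -(UU p n (-g.i) • g.a) := rfl
lemma inv_i (g : Gr p n) : (g⁻¹).i = -g.i := rfl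

instance : Group (Gr p n) := by
  apply Group.ofLeftAxioms
  · intro g h k
    ext : 1
    · simp only [mul_a, mul_i, UU_add, smul_add, mul_smul]
      abel
    · simp only [mul_i]; ring
  · intro g
    ext : 1
    · simp only [mul_a, one_a, one_i, UU_zero, one_smul, zero_add]
    · simp only [mul_i, one_i, zero_add]
  · intro g
    ext : 1
    · simp only [mul_a, inv_a, inv_i, one_a]
      rw [neg_add_eq_zero.mpr rfl]
    · simp only [mul_i, inv_i, one_i, neg_add_cancel]


/-- powers of elements of `A`. -/
lemma A_pow (a : ZMod (p^n) × ZMod (p^n)) (k : ℕ) :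
    (⟨a, 0⟩ : Gr p n)^k = ⟨k • a, 0⟩ := by
  induction k with
  | zero => ext : 1 <;> simp [one_a, one_i]
  | succ k ih =>
    rw [pow_succ, ih]
    ext : 1
    · simp only [mul_a, UU_zero, one_smul, succ_nsmul]
    · simp only [mul_i, add_zero]

/-- The geometric-sum scalar. -/
def Q : ℕ → ZMod (p^n)
  | 0 => 0
  | (k+1) => 1 + uu p n * Q k

lemma Q_succ' (k : ℕ) : Q p n (k+1) = Q p n k + (uu p n)^k := by
  induction k with
  | zero => simp [Q, pow_zero]
  | succ k ih =>
    calc Q p n (k+2) = 1 + uu p n * Q p n (k+1) := rfl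
      _ = 1 + uu p n * (Q p n k + (uu p n)^k) := by rw [ih]
      _ = (1 + uu p n * Q p n k) + (uu p n)^(k+1) := by ring
      _ = Q p n (k+1) + (uu p n)^(k+1) := rfl

lemma p_mul_Q (k : ℕ) : (p : ZMod (p^n)) * Q p n k = (uu p n)^k - 1 := by
  induction k with
  | zero => simp [Q]
  | succ k ih =>
    show (p : ZMod (p^n)) * (1 + uu p n * Q p n k) = _
    rw [mul_add, mul_comm ((p:ZMod (p^n))) (uu p n * Q p n k), mul_assoc, mul_comm (Q p n k),
      ih, pow_succ]
    have : uu p n = 1 + p := rfl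
    rw [this]; ring

/-- powers of elements of the form `⟨c, 1⟩`. -/
lemma T_pow (c : ZMod (p^n) × ZMod (p^n)) (k : ℕ) :
    (⟨c, 1⟩ : Gr p n)^k = ⟨Q p n k • c, (k : ZMod (p^(n-1)))⟩ := by
  induction k with
  | zero => ext : 1 <;> simp [one_a, one_i, Q]
  | succ k ih =>
    rw [pow_succ, ih]
    ext : 1
    · simp only [mul_a, UU_natCast, Q_succ', add_smul]
    · simp only [mul_i]; push_cast; ring

def tg : Gr p n := ⟨0, 1⟩

lemma tg_pow (k : ℕ) : (tg p n)^k = ⟨0, (k : ZMod (p^(n-1)))⟩ := by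
  rw [tg, T_pow, smul_zero]

lemma i_decomp (g : Gr p n) : g = ⟨g.a, 0⟩ * ⟨0, g.i⟩ := by
  ext : 1
  · simp only [mul_a, smul_zero, add_zero]
  · simp only [mul_i, zero_add]

lemma i_eq_t_pow (i : ZMod (p^(n-1))) : (⟨0, i⟩ : Gr p n) = (tg p n)^(i.val) := by
  rw [tg_pow]
  ext : 1
  · rfl
  · exact (ZMod.natCast_rightInverse i).symm

/-- equivalence with the product type (for counting). -/
def grEquiv : Gr p n ≃ (ZMod (p^n) × ZMod (p^n)) × ZMod (p^(n-1)) where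
  toFun g := (g.a, g.i)
  invFun x := ⟨x.1, x.2⟩
  left_inv g := rfl
  right_inv x := rfl

instance : Finite (Gr p n) := Finite.of_equiv _ (grEquiv p n).symm

lemma card_gr : Nat.card (Gr p n) = p^(n + n + (n-1)) := by
  rw [Nat.card_congr (grEquiv p n), Nat.card_prod, Nat.card_prod, Nat.card_zmod,
    Nat.card_zmod, ← pow_add, ← pow_add]

lemma isPGroup_gr : IsPGroup p (Gr p n) := IsPGroup.of_card (card_gr p n)

/-- The subgroup `A = (ZMod (p^n))²`. -/
def AG : Subgroup (Gr p n) where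
  carrier := {g | g.i = 0}
  mul_mem' := by
    intro g h hg hh
    simp only [Set.mem_setOf_eq, mul_i] at *
    rw [hg, hh, add_zero]
  one_mem' := rfl
  inv_mem' := by
    intro g hg
    simp only [Set.mem_setOf_eq, inv_i] at *
    rw [hg, neg_zero]

lemma mem_AG {g : Gr p n} : g ∈ AG p n ↔ g.i = 0 := Iff.rfl

def agEquiv : (AG p n) ≃ (ZMod (p^n) × ZMod (p^n)) where
  toFun g := (g : Gr p n).a
  invFun a := ⟨⟨a, 0⟩, rfl⟩
  left_inv g := by
    apply Subtype.ext
    ext : 1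
    · rfl
    · exact (g.2).symm
  right_inv a := rfl

lemma card_AG : Nat.card (AG p n) = p^(n+n) := by
  rw [Nat.card_congr (agEquiv p n), Nat.card_prod, Nat.card_zmod, ← pow_add]

/-- projection to the quotient `ZMod (p^(n-1))`. -/
def prj : Gr p n →* Multiplicative (ZMod (p^(n-1))) where
  toFun g := Multiplicative.ofAdd g.i
  map_one' := rfl
  map_mul' g h := rfl

open scoped commutatorElement in
/-- commutator formula. -/
lemma comm_formula (x y : Gr p n) :
    ⁅x, y⁆ = ⟨(1 - UU p n y.i) • x.a + (UU p n x.i - 1) • y.a, 0⟩ := by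
  have hxy : UU p n (x.i + y.i) * UU p n (-x.i) = UU p n y.i := by
    rw [← UU_add]
    congr 1; ring
  have hyy : UU p n y.i * UU p n (-y.i) = 1 := by rw [mul_comm]; exact UU_neg_mul p n y.i
  show x * y * x⁻¹ * y⁻¹ = _
  ext : 1
  · simp only [mul_a, mul_i, inv_a, inv_i, smul_neg, smul_smul, hxy, add_neg_cancel_right]
    rw [show x.i + y.i + -x.i = y.i by ring, hyy]
    simp only [sub_smul, one_smul, smul_add]
    abel
  · simp only [mul_i, inv_i]; ring

/-- the subgroups `p^k A`. -/
def HS (k : ℕ) : Subgroup (Gr p n) where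
  carrier := {g | g.i = 0 ∧ ∃ x, g.a = ((p^k : ℕ) : ZMod (p^n)) • x}
  mul_mem' := by
    rintro g h ⟨hgi, x, hgx⟩ ⟨hhi, y, hhy⟩
    refine ⟨by rw [mul_i, hgi, hhi, add_zero], x + y, ?_⟩
    rw [mul_a, hgi, UU_zero, one_smul, hgx, hhy, smul_add]
  one_mem' := ⟨rfl, 0, by rw [one_a, smul_zero]⟩
  inv_mem' := by
    rintro g ⟨hgi, x, hgx⟩
    refine ⟨by rw [inv_i, hgi, neg_zero], -x, ?_⟩
    rw [inv_a, hgi, neg_zero, UU_zero, one_smul, hgx, smul_neg]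

lemma one_sub_UU (j : ZMod (p^(n-1))) :
    1 - UU p n j = ((p:ℕ) : ZMod (p^n)) * (- Q p n j.val) := by
  rw [UU, mul_neg, p_mul_Q]
  push_cast
  ring

lemma lcs_succ' (k : ℕ) :
    (⊤ : Subgroup (Gr p n)).lowerCentralSeries (k+1) = ⁅(⊤ : Subgroup (Gr p n)).lowerCentralSeries k, ⊤⁆ := rfl

lemma lcs_le_HS (k : ℕ) : (⊤ : Subgroup (Gr p n)).lowerCentralSeries (k+1) ≤ HS p n (k+1) := by
  induction k with
  | zero =>
    rw [lcs_succ']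
    rw [Subgroup.commutator_le]
    intro x _ y _
    rw [comm_formula]
    refine ⟨rfl, (- Q p n y.i.val) • x.a + (Q p n x.i.val) • y.a, ?_⟩
    rw [one_sub_UU]
    have h2 : UU p n x.i - 1 = ((p:ℕ) : ZMod (p^n)) * (Q p n x.i.val) := by
      have := one_sub_UU p n x.i
      linear_combination -this
    rw [h2]
    rw [pow_one, smul_add, mul_smul, mul_smul]
  | succ k ih =>
    rw [lcs_succ']
    refine le_trans (Subgroup.commutator_mono ih (le_refl ⊤)) ?_
    rw [Subgroup.commutator_le]
    rintro g ⟨hgi, x, hgx⟩ y _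
    rw [comm_formula, hgi, UU_zero, sub_self, zero_smul, add_zero, hgx]
    refine ⟨rfl, (- Q p n y.i.val) • x, ?_⟩
    rw [one_sub_UU, smul_smul, smul_smul]
    congr 1
    push_cast
    ring

open scoped commutatorElement in
lemma HS_le_lcs (k : ℕ) : HS p n k ≤ (⊤ : Subgroup (Gr p n)).lowerCentralSeries k := by
  induction k with
  | zero => exact le_top
  | succ k ih =>
    rintro g ⟨hgi, x, hgx⟩
    rw [lcs_succ']
    have hg : g = ⁅(⟨((p^k : ℕ) : ZMod (p^n)) • (-x), 0⟩ : Gr p n), tg p n⁆ := by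
      rw [comm_formula]
      have h1 : (1:ZMod (p^n)) - uu p n = -((p:ℕ) : ZMod (p^n)) := by
        rw [show uu p n = 1 + (p : ZMod (p^n)) from rfl]
        ring
      ext : 1
      · simp only [tg, UU_one, UU_zero, sub_self, zero_smul, smul_zero, add_zero, h1, hgx]
        match_scalars
        push_cast
        ring
      · exact hgi
    rw [hg]
    exact Subgroup.commutator_mem_commutator
      (ih ⟨rfl, -x, rfl⟩) (Subgroup.mem_top _)

lemma lcs_n_eq_bot (hn : 1 ≤ n) : (⊤ : Subgroup (Gr p n)).lowerCentralSeries n = ⊥ := by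
  obtain ⟨k, rfl⟩ : ∃ k, n = k + 1 := ⟨n-1, by omega⟩
  rw [eq_bot_iff]
  refine le_trans (lcs_le_HS p (k+1) k) ?_
  rintro g ⟨hgi, x, hgx⟩
  have hz : ((p^(k+1) : ℕ) : ZMod (p^(k+1))) = 0 := ZMod.natCast_self _
  rw [hz, zero_smul] at hgx
  rw [Subgroup.mem_bot]
  ext : 1
  · rw [hgx, one_a]
  · rw [hgi, one_i]


-- ============ new content ============

/-- `A` is mapped into itself by every automorphism. -/
lemma phi_maps_AG (hn : 2 ≤ n) (φ : Gr p n ≃* Gr p n) :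
    ∀ bb : ZMod (p^n) × ZMod (p^n), (φ ⟨bb, 0⟩).i = 0 := by
  have hp1 : 1 < p := hpf.out.one_lt
  by_contra hcon
  push_neg at hcon
  obtain ⟨bstar, hbstar⟩ := hcon
  set B := Subgroup.map φ.toMonoidHom (AG p n) with hB
  have hBcomm : ∀ x ∈ B, ∀ y ∈ B, x * y = y * x := by
    rintro x hx y hy
    rw [hB, Subgroup.mem_map] at hx hy
    obtain ⟨x', hx', rfl⟩ := hx
    obtain ⟨y', hy', rfl⟩ := hy
    show φ x' * φ y' = φ y' * φ x'
    rw [← map_mul, ← map_mul]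
    congr 1
    ext : 1
    · rw [mul_a, mul_a, (mem_AG p n).1 hx', (mem_AG p n).1 hy', UU_zero, one_smul,
        one_smul, add_comm]
    · rw [mul_i, mul_i, add_comm]
  set V : Set ℕ := {v | ∃ g ∈ B, g.i ≠ 0 ∧ padicValNat p g.i.val = v} with hV
  have hVne : V.Nonempty := by
    refine ⟨padicValNat p ((φ ⟨bstar, 0⟩).i.val), φ ⟨bstar,0⟩, ?_, hbstar, rfl⟩
    exact Subgroup.mem_map.mpr ⟨⟨bstar,0⟩, rfl, rfl⟩
  set v := sInf V with hv
  obtain ⟨b₀, hb₀B, hb₀i, hb₀v⟩ := Nat.sInf_mem hVne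
  have hval_pos : b₀.i.val ≠ 0 := fun h => hb₀i ((ZMod.val_eq_zero _).1 h)
  have hval_lt : b₀.i.val < p^(n-1) := ZMod.val_lt _
  have hpv_dvd : p^v ∣ b₀.i.val := by rw [hv, ← hb₀v]; exact pow_padicValNat_dvd
  have hv_le : v + 2 ≤ n := by
    have h1 := Nat.le_of_dvd (by omega) hpv_dvd
    have h2 : p^v < p^(n-1) := lt_of_le_of_lt h1 hval_lt
    have h3 := (Nat.pow_lt_pow_iff_right hp1).1 h2
    omega
  have hmin : ∀ g ∈ B, g.i ≠ 0 → p^v ∣ g.i.val := by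
    intro g hg hgi
    have : v ≤ padicValNat p g.i.val := Nat.sInf_le ⟨g, hg, hgi, rfl⟩
    exact dvd_trans (pow_dvd_pow p this) pow_padicValNat_dvd
  set ψB : B →* Multiplicative (ZMod (p^(n-1))) := (prj p n).comp B.subtype with hψB
  have hcard1 : Nat.card B = Nat.card (B ⧸ ψB.ker) * Nat.card ψB.ker :=
    Subgroup.card_eq_card_quotient_mul_card_subgroup ψB.ker
  have hcard2 : Nat.card (B ⧸ ψB.ker) = Nat.card ψB.range :=
    Nat.card_congr (QuotientGroup.quotientKerEquivRange ψB).toEquiv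
  have hcardB : Nat.card B = p^(n+n) := by
    rw [hB, ← Nat.card_congr ((AG p n).equivMapOfInjective φ.toMonoidHom φ.injective).toEquiv]
    exact card_AG p n
  -- bound on the kernel
  have hker : Nat.card ψB.ker ≤ p^(v+1) * p^(v+1) := by
    obtain ⟨w, hw, hwe⟩ := uu_sub_one p n b₀.i.val hval_pos
    rw [hb₀v] at hwe
    have hcast : ((p^(v+1):ℕ) : ZMod (p^n)) = (p:ZMod (p^n))^(1+v) := by push_cast; ring
    have hkill : ∀ k : ψB.ker,
        ((p^(v+1) : ℕ) : ZMod (p^n)) * ((k : B) : Gr p n).a.1 = 0 ∧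
        ((p^(v+1) : ℕ) : ZMod (p^n)) * ((k : B) : Gr p n).a.2 = 0 := by
      intro k
      set g := ((k : B) : Gr p n) with hgdef
      have hgB : g ∈ B := (k : B).2
      have hgi : g.i = 0 := by
        have hk := k.2
        rw [MonoidHom.mem_ker] at hk
        have : Multiplicative.ofAdd g.i = 1 := hk
        exact ofAdd_eq_one.mp this
      have hcomm := hBcomm g hgB b₀ hb₀B
      have hca := congrArg Gr.a hcomm
      rw [mul_a, mul_a, hgi, UU_zero, one_smul] at hca
      have hca2 : g.a = UU p n b₀.i • g.a := by
        have : b₀.a + g.a = b₀.a + UU p n b₀.i • g.a := by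
          rw [← hca]; abel
        exact add_left_cancel this
      have hUU : UU p n b₀.i = (uu p n)^(b₀.i.val) := rfl
      rw [hUU] at hca2
      constructor
      · have h1 : g.a.1 = (uu p n)^(b₀.i.val) * g.a.1 := by
          have := congrArg Prod.fst hca2
          rwa [Prod.smul_fst, smul_eq_mul] at this
        have h2 : ((uu p n)^(b₀.i.val) - 1) * g.a.1 = 0 := by linear_combination -h1
        rw [hwe] at h2
        rw [hcast]
        exact (hw.mul_left_eq_zero).1 (by linear_combination h2)
      · have h1 : g.a.2 = (uu p n)^(b₀.i.val) * g.a.2 := by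
          have := congrArg Prod.snd hca2
          rwa [Prod.smul_snd, smul_eq_mul] at this
        have h2 : ((uu p n)^(b₀.i.val) - 1) * g.a.2 = 0 := by linear_combination -h1
        rw [hwe] at h2
        rw [hcast]
        exact (hw.mul_left_eq_zero).1 (by linear_combination h2)
    set ann := {x : ZMod (p^n) // ((p^(v+1) : ℕ) : ZMod (p^n)) * x = 0} with hann
    set F : ψB.ker → ann × ann :=
      fun k => (⟨((k : B) : Gr p n).a.1, (hkill k).1⟩, ⟨((k : B) : Gr p n).a.2, (hkill k).2⟩)
      with hF
    have hFinj : Function.Injective F := by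
      intro k1 k2 h12
      have ha1 : ((k1 : B) : Gr p n).a.1 = ((k2 : B) : Gr p n).a.1 :=
        congrArg (fun z => (z.1 : ZMod (p^n))) h12
      have ha2 : ((k1 : B) : Gr p n).a.2 = ((k2 : B) : Gr p n).a.2 :=
        congrArg (fun z => (z.2 : ZMod (p^n))) h12
      have hi1 : ((k1 : B) : Gr p n).i = 0 := by
        have hk := k1.2; rw [MonoidHom.mem_ker] at hk; exact ofAdd_eq_one.mp hk
      have hi2 : ((k2 : B) : Gr p n).i = 0 := by
        have hk := k2.2; rw [MonoidHom.mem_ker] at hk; exact ofAdd_eq_one.mp hk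
      apply Subtype.ext
      apply Subtype.ext
      ext : 1
      · exact Prod.ext ha1 ha2
      · rw [hi1, hi2]
    calc Nat.card ψB.ker ≤ Nat.card (ann × ann) := Nat.card_le_card_of_injective F hFinj
      _ = Nat.card ann * Nat.card ann := Nat.card_prod _ _
      _ ≤ p^(v+1) * p^(v+1) := Nat.mul_le_mul (card_ann p n _) (card_ann p n _)
  -- bound on the range
  have hrange : Nat.card ψB.range ≤ p^(n-1-v) := by
    have hdv : ∀ y : ψB.range, p^v ∣ (Multiplicative.toAdd (y : Multiplicative (ZMod (p^(n-1))))).val := by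
      rintro ⟨y, hy⟩
      obtain ⟨x, rfl⟩ := hy
      show p^v ∣ ((x : Gr p n).i).val
      by_cases h0 : (x : Gr p n).i = 0
      · rw [h0]; simp
      · exact hmin _ x.2 h0
    set F : ψB.range → Fin (p^(n-1-v)) := fun y =>
      ⟨(Multiplicative.toAdd (y : Multiplicative (ZMod (p^(n-1))))).val / p^v, by
        apply Nat.div_lt_of_lt_mul
        calc (Multiplicative.toAdd (y : Multiplicative (ZMod (p^(n-1))))).val
            < p^(n-1) := ZMod.val_lt _
          _ = p^v * p^(n-1-v) := by rw [← pow_add]; congr 1; omega⟩ with hF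
    have hFinj : Function.Injective F := by
      intro y1 y2 h12
      have h1 := Nat.div_mul_cancel (hdv y1)
      have h2 := Nat.div_mul_cancel (hdv y2)
      have h3 : (Multiplicative.toAdd (y1 : Multiplicative (ZMod (p^(n-1))))).val / p^v
          = (Multiplicative.toAdd (y2 : Multiplicative (ZMod (p^(n-1))))).val / p^v := by
        simpa [hF, Fin.ext_iff] using h12
      have hval : (Multiplicative.toAdd (y1 : Multiplicative (ZMod (p^(n-1))))).val
          = (Multiplicative.toAdd (y2 : Multiplicative (ZMod (p^(n-1))))).val := by
        rw [← h1, ← h2, h3]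
      apply Subtype.ext
      exact ZMod.val_injective _ hval
    calc Nat.card ψB.range ≤ Nat.card (Fin (p^(n-1-v))) :=
        Nat.card_le_card_of_injective F hFinj
      _ = p^(n-1-v) := by simp
  -- contradiction
  have hble : p^(n+n) ≤ p^(n-1-v) * (p^(v+1) * p^(v+1)) := by
    rw [← hcardB, hcard1, hcard2]
    exact Nat.mul_le_mul hrange hker
  have hble2 : p^(n+n) ≤ p^((n-1-v) + ((v+1) + (v+1))) := by
    calc p^(n+n) ≤ p^(n-1-v) * (p^(v+1) * p^(v+1)) := hble
      _ = p^((n-1-v) + ((v+1) + (v+1))) := by rw [← pow_add, ← pow_add]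
  have := (Nat.pow_le_pow_iff_right hp1).1 hble2
  omega


lemma conj_A (s : Gr p n) (c : ZMod (p^n) × ZMod (p^n)) :
    s * ⟨c, 0⟩ * s⁻¹ = ⟨UU p n s.i • c, 0⟩ := by
  have h : UU p n (s.i + 0) * UU p n (-s.i) = 1 := by
    rw [← UU_add]
    rw [show s.i + 0 + -s.i = 0 by ring, UU_zero]
  ext : 1
  · simp only [mul_a, mul_i, inv_a, inv_i]
    rw [smul_neg, smul_smul, h, one_smul]
    abel
  · simp only [mul_i, inv_i]
    ring

lemma cast_one_add_p : ((1 + p : ℕ) : ZMod (p^n)) = uu p n := by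
  rw [uu]; push_cast; ring

lemma phi_tg_i (hn : 2 ≤ n) (φ : Gr p n ≃* Gr p n) : (φ (tg p n)).i = 1 := by
  have hchar := phi_maps_AG p n hn φ
  have hn1 : 1 ≤ n := by omega
  set e : Gr p n := ⟨(1, 0), 0⟩ with he
  set A' := (φ e).a with hA'
  have hei : (φ e).i = 0 := hchar _
  have hφe : φ e = ⟨A', 0⟩ := by
    ext : 1
    · rfl
    · exact hei
  have hsmul_pair : ∀ (k : ℕ) (x : ZMod (p^n) × ZMod (p^n)),
      (k : ℕ) • x = (((k:ℕ) : ZMod (p^n)) * x.1, ((k:ℕ) : ZMod (p^n)) * x.2) := by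
    intro k x
    ext : 1
    · rw [Prod.smul_fst, nsmul_eq_mul]
    · rw [Prod.smul_snd, nsmul_eq_mul]
  have hnk : ¬(((p^(n-1) : ℕ) : ZMod (p^n)) * A'.1 = 0 ∧
      ((p^(n-1):ℕ) : ZMod (p^n)) * A'.2 = 0) := by
    rintro ⟨h1, h2⟩
    have hpow : (φ e)^(p^(n-1)) = 1 := by
      rw [hφe, A_pow]
      ext : 1
      · show (p^(n-1) : ℕ) • A' = (1 : Gr p n).a
        rw [one_a, hsmul_pair, h1, h2]
        rfl
      · rfl
    have hepow : e^(p^(n-1)) = 1 := φ.injective (by rw [map_pow, hpow, map_one])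
    rw [he, A_pow] at hepow
    have hcomp := congrArg Gr.a hepow
    have h1' : ((p^(n-1) : ℕ) : ZMod (p^n)) = 0 := by
      have := congrArg Prod.fst hcomp
      rw [hsmul_pair] at this
      simpa [one_a] using this
    rw [ZMod.natCast_eq_zero_iff] at h1'
    have := (Nat.pow_dvd_pow_iff_le_right hpf.out.one_lt).1 h1'
    omega
  have hunit : IsUnit A'.1 ∨ IsUnit A'.2 := by
    by_contra hcon
    push_neg at hcon
    obtain ⟨y1, hy1⟩ := not_unit_divides p n hcon.1
    obtain ⟨y2, hy2⟩ := not_unit_divides p n hcon.2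
    have hpn : ((p^(n-1) : ℕ) : ZMod (p^n)) * (p : ZMod (p^n)) = 0 := by
      rw [show ((p^(n-1):ℕ) : ZMod (p^n)) * (p : ZMod (p^n)) = ((p^(n-1) * p : ℕ) : ZMod (p^n))
        by push_cast; ring]
      rw [ZMod.natCast_eq_zero_iff]
      rw [← pow_succ]
      exact pow_dvd_pow p (by omega)
    exact hnk ⟨by rw [hy1, ← mul_assoc, hpn, zero_mul],
      by rw [hy2, ← mul_assoc, hpn, zero_mul]⟩
  have hrel : tg p n * e * (tg p n)⁻¹ = e^(1+p) := by
    rw [he, conj_A, A_pow]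
    ext : 1
    · show UU p n (tg p n).i • ((1:ZMod (p^n)), (0:ZMod (p^n))) = _
      rw [show (tg p n).i = 1 from rfl, UU_one, hsmul_pair]
      rw [cast_one_add_p]
      ext : 1
      · rw [Prod.smul_fst, smul_eq_mul]
      · rw [Prod.smul_snd, smul_eq_mul]
    · rfl
  have hrel2 : φ (tg p n) * φ e * (φ (tg p n))⁻¹ = (φ e)^(1+p) := by
    rw [← map_inv, ← map_mul, ← map_mul, ← map_pow, hrel]
  rw [hφe, conj_A, A_pow] at hrel2
  have ha := congrArg Gr.a hrel2
  show (φ (tg p n)).i = 1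
  have hUUu : UU p n ((φ (tg p n)).i) = uu p n := by
    have ha2 : UU p n ((φ (tg p n)).i) • A' = ((1+p : ℕ)) • A' := ha
    rw [hsmul_pair] at ha2
    rcases hunit with hu | hu
    · have h1 := congrArg Prod.fst ha2
      simp only [Prod.smul_fst, smul_eq_mul] at h1
      rw [cast_one_add_p] at h1
      exact hu.mul_right_cancel h1
    · have h1 := congrArg Prod.snd ha2
      simp only [Prod.smul_snd, smul_eq_mul] at h1
      rw [cast_one_add_p] at h1
      exact hu.mul_right_cancel h1
  have hpowinj : (φ (tg p n)).i.val ≡ 1 [MOD p^(n-1)] := by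
    apply uu_pow_inj p n hn1
    rw [pow_one]
    exact hUUu
  have hval : (((φ (tg p n)).i.val : ℕ) : ZMod (p^(n-1))) = ((1:ℕ) : ZMod (p^(n-1))) :=
    (ZMod.natCast_eq_natCast_iff _ _ _).mpr hpowinj
  have hid : (((φ (tg p n)).i.val : ℕ) : ZMod (p^(n-1))) = (φ (tg p n)).i :=
    ZMod.natCast_rightInverse _
  rw [hid] at hval
  rw [hval]
  push_cast
  ring

def Qnat : ℕ → ℕ
  | 0 => 0
  | (k+1) => 1 + (1+p) * Qnat k

lemma Q_cast (k : ℕ) : Q p n k = ((Qnat p k : ℕ) : ZMod (p^n)) := by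
  induction k with
  | zero => simp [Q, Qnat]
  | succ k ih =>
    show 1 + uu p n * Q p n k = _
    rw [ih, show Qnat p (k+1) = 1 + (1+p) * Qnat p k from rfl, uu]
    push_cast
    ring

lemma p_Qnat (k : ℕ) : p * Qnat p k + 1 = (1+p)^k := by
  induction k with
  | zero => simp [Qnat]
  | succ k ih =>
    rw [show Qnat p (k+1) = 1 + (1+p) * Qnat p k from rfl, pow_succ, ← ih]
    ring

lemma phi_tg_a (hn : 2 ≤ n) (φ : Gr p n ≃* Gr p n) :
    ∃ bb : ZMod (p^n) × ZMod (p^n), (φ (tg p n)).a = (p : ZMod (p^n)) • bb := by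
  have hn1 : 1 ≤ n := by omega
  have hp1 : 1 < p := hpf.out.one_lt
  have hti := phi_tg_i p n hn φ
  set a₀ := (φ (tg p n)).a with ha₀
  have htg : φ (tg p n) = ⟨a₀, 1⟩ := by
    ext : 1
    · rfl
    · exact hti
  have htm : (tg p n)^(p^(n-1)) = 1 := by
    rw [tg_pow]
    ext : 1
    · rfl
    · show ((p^(n-1) : ℕ) : ZMod (p^(n-1))) = 0
      exact ZMod.natCast_self _
  have hQ : Q p n (p^(n-1)) • a₀ = 0 := by
    have h1 : (φ (tg p n))^(p^(n-1)) = 1 := by rw [← map_pow, htm, map_one]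
    rw [htg, T_pow] at h1
    have := congrArg Gr.a h1
    exact this
  -- Qnat (p^(n-1)) = p^(n-1) * c with c a unit mod p
  obtain ⟨c, hc, hce⟩ := one_add_p_pow p (p^(n-1)) (NeZero.ne _)
  rw [padicValNat.prime_pow] at hce
  have hQnat : Qnat p (p^(n-1)) = p^(n-1) * c := by
    have h2 := p_Qnat p (p^(n-1))
    rw [hce] at h2
    have h3 : p * Qnat p (p^(n-1)) = p^(1 + (n-1)) * c := by omega
    have h4 : p^(1 + (n-1)) * c = p * (p^(n-1) * c) := by
      rw [pow_add, pow_one]; ring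
    exact Nat.eq_of_mul_eq_mul_left (by omega) (h3.trans h4)
  have hcunit : IsUnit ((c : ℕ) : ZMod (p^n)) := isUnit_of_not_dvd p n hc
  have hkill : ∀ j : ZMod (p^n), ((p^(n-1):ℕ) : ZMod (p^n)) * ((c:ℕ) : ZMod (p^n)) * j = 0 →
      ((p^(n-1):ℕ) : ZMod (p^n)) * j = 0 := by
    intro j hj
    apply (hcunit.mul_left_eq_zero).1
    linear_combination hj
  have hQa : Q p n (p^(n-1)) = ((p^(n-1):ℕ) : ZMod (p^n)) * ((c:ℕ) : ZMod (p^n)) := by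
    rw [Q_cast, hQnat]
    push_cast
    ring
  rw [hQa] at hQ
  have h1 : ((p^(n-1):ℕ) : ZMod (p^n)) * a₀.1 = 0 := by
    apply hkill
    have := congrArg Prod.fst hQ
    rwa [Prod.smul_fst, smul_eq_mul] at this
  have h2 : ((p^(n-1):ℕ) : ZMod (p^n)) * a₀.2 = 0 := by
    apply hkill
    have := congrArg Prod.snd hQ
    rwa [Prod.smul_snd, smul_eq_mul] at this
  obtain ⟨y1, hy1⟩ := p_divides p n hn1 h1
  obtain ⟨y2, hy2⟩ := p_divides p n hn1 h2
  refine ⟨(y1, y2), ?_⟩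
  ext : 1
  · rw [Prod.smul_fst, smul_eq_mul]; exact hy1
  · rw [Prod.smul_snd, smul_eq_mul]; exact hy2


lemma nsmul_pair (k : ℕ) (x : ZMod (p^n) × ZMod (p^n)) :
    k • x = (((k:ℕ) : ZMod (p^n)) * x.1, ((k:ℕ) : ZMod (p^n)) * x.2) := by
  ext : 1
  · rw [Prod.smul_fst, nsmul_eq_mul]
  · rw [Prod.smul_snd, nsmul_eq_mul]

lemma rsmul_pair (r : ZMod (p^n)) (x : ZMod (p^n) × ZMod (p^n)) :
    r • x = (r * x.1, r * x.2) := by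
  ext : 1
  · rw [Prod.smul_fst, smul_eq_mul]
  · rw [Prod.smul_snd, smul_eq_mul]

lemma rsmul_eq_nsmul (r : ZMod (p^n)) (x : ZMod (p^n) × ZMod (p^n)) :
    r • x = (r.val : ℕ) • x := by
  rw [nsmul_pair, rsmul_pair, ZMod.natCast_val, ZMod.cast_id]

/-- main result for `n ≥ 2`: every twisted conjugacy class of 1 is a subgroup. -/
theorem twisted2 (hn : 2 ≤ n) (φ : Gr p n ≃* Gr p n) :
    ∃ H : Subgroup (Gr p n),
      (H : Set (Gr p n)) = {g : Gr p n | ∃ x : Gr p n, g = x⁻¹ * φ x} := by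
  obtain ⟨bb, hbb⟩ := phi_tg_a p n hn φ
  have hchar := phi_maps_AG p n hn φ
  have hti := phi_tg_i p n hn φ
  have hn1 : 1 ≤ n := by omega
  set a₀ := (φ (tg p n)).a with ha₀
  set ψf : (ZMod (p^n) × ZMod (p^n)) → (ZMod (p^n) × ZMod (p^n)) :=
    fun aa => (φ ⟨aa, 0⟩).a - aa with hψf
  have hφA : ∀ aa, φ (⟨aa,0⟩ : Gr p n) = ⟨aa + ψf aa, 0⟩ := by
    intro aa
    ext : 1
    · show (φ ⟨aa,0⟩).a = aa + ((φ ⟨aa,0⟩).a - aa)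
      abel
    · exact hchar aa
  have hadd : ∀ aa bb', ψf (aa + bb') = ψf aa + ψf bb' := by
    intro x y
    have h1 : (⟨x+y, (0 : ZMod (p^(n-1)))⟩ : Gr p n) = ⟨x,0⟩ * ⟨y,0⟩ := by
      ext : 1
      · rw [mul_a]
        show x + y = x + UU p n 0 • y
        rw [UU_zero, one_smul]
      · rw [mul_i, add_zero]
    simp only [hψf]
    rw [h1, map_mul, mul_a, hchar x, UU_zero, one_smul]
    abel
  have hzero : ψf 0 = 0 := by
    have h1 : (⟨(0 : ZMod (p^n) × ZMod (p^n)), (0 : ZMod (p^(n-1)))⟩ : Gr p n) = 1 := rfl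
    simp only [hψf]
    rw [h1, map_one, one_a]
    abel
  have hnat : ∀ (k : ℕ) aa, ψf (k • aa) = k • ψf aa := by
    intro k
    induction k with
    | zero => intro aa; rw [zero_smul, zero_smul, hzero]
    | succ k ih => intro aa; rw [succ_nsmul, succ_nsmul, hadd, ih]
  have hsmulψ : ∀ (r : ZMod (p^n)) aa, ψf (r • aa) = r • ψf aa := by
    intro r aa
    rw [rsmul_eq_nsmul, hnat, ← rsmul_eq_nsmul]
  have hφtg : φ (tg p n) = ⟨a₀, 1⟩ := by
    ext : 1
    · rfl
    · exact hti
  have key : ∀ x : Gr p n, x⁻¹ * φ x =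
      ⟨UU p n (-x.i) • (ψf x.a + Q p n (x.i.val) • a₀), 0⟩ := by
    intro x
    have hφt : φ (⟨0, x.i⟩ : Gr p n) = ⟨Q p n (x.i.val) • a₀, x.i⟩ := by
      rw [i_eq_t_pow, map_pow, hφtg, T_pow]
      ext : 1
      · rfl
      · exact ZMod.natCast_rightInverse x.i
    have hdec : φ x = φ ⟨x.a, 0⟩ * φ ⟨0, x.i⟩ := by rw [← map_mul, ← i_decomp]
    rw [hdec, hφA, hφt]
    ext : 1
    · simp only [mul_a, mul_i, inv_a, inv_i]
      rw [UU_zero, one_smul, smul_add, smul_add, smul_add]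
      abel
    · simp only [mul_i, inv_i]
      ring
  let H : Subgroup (Gr p n) :=
    { carrier := {g | g.i = 0 ∧ ∃ aa, ∃ r : ZMod (p^n), g.a = ψf aa + r • a₀}
      mul_mem' := by
        rintro g h ⟨hgi, aa, r, hga⟩ ⟨hhi, aa', r', hha⟩
        refine ⟨by rw [mul_i, hgi, hhi, add_zero], aa + aa', r + r', ?_⟩
        rw [mul_a, hgi, UU_zero, one_smul, hga, hha, hadd, add_smul]
        abel
      one_mem' := ⟨rfl, 0, 0, by rw [one_a, hzero, zero_smul, add_zero]⟩
      inv_mem' := by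
        rintro g ⟨hgi, aa, r, hga⟩
        refine ⟨by rw [inv_i, hgi, neg_zero], -aa, -r, ?_⟩
        rw [inv_a, hgi, neg_zero, UU_zero, one_smul, hga]
        have hz := hadd aa (-aa)
        rw [add_neg_cancel, hzero] at hz
        have hneg : ψf (-aa) = -ψf aa := eq_neg_of_add_eq_zero_right hz.symm
        rw [hneg, neg_smul]
        abel }
  have hmem : ∀ g : Gr p n,
      g ∈ H ↔ (g.i = 0 ∧ ∃ aa, ∃ r : ZMod (p^n), g.a = ψf aa + r • a₀) := fun g => Iff.rfl
  refine ⟨H, ?_⟩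
  ext g
  rw [SetLike.mem_coe, hmem]
  simp only [Set.mem_setOf_eq]
  constructor
  · rintro ⟨hgi, aa, r, hga⟩
    obtain ⟨j, hj⟩ := uu_surj p n hn1 (-r)
    set i0 : ZMod (p^(n-1)) := -((j:ℕ) : ZMod (p^(n-1))) with hi0
    refine ⟨⟨UU p n i0 • aa, i0⟩, ?_⟩
    rw [key]
    have hUU2 : UU p n (-i0) • (ψf (UU p n i0 • aa)) = ψf aa := by
      rw [hsmulψ, smul_smul, UU_neg_mul, one_smul]
    have hsc : UU p n (-i0) • (Q p n (i0.val) • a₀) = r • a₀ := by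
      have hji : -i0 = ((j:ℕ) : ZMod (p^(n-1))) := by rw [hi0, neg_neg]
      have hm : (uu p n)^(j + i0.val) = 1 := by
        have hc0 : ((j + i0.val : ℕ) : ZMod (p^(n-1))) = 0 := by
          push_cast
          rw [ZMod.natCast_val, ZMod.cast_id, hi0]
          ring
        rw [ZMod.natCast_eq_zero_iff] at hc0
        obtain ⟨q, hq⟩ := hc0
        rw [hq, pow_mul, uu_pow_card, one_pow]
      have hscalar : (uu p n)^j * Q p n (i0.val) * (p : ZMod (p^n))
          = r * (p:ZMod (p^n)) := by
        calc (uu p n)^j * Q p n (i0.val) * (p:ZMod (p^n))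
            = (uu p n)^j * ((p:ZMod (p^n)) * Q p n (i0.val)) := by ring
          _ = (uu p n)^j * ((uu p n)^(i0.val) - 1) := by rw [p_mul_Q]
          _ = (uu p n)^(j + i0.val) - (uu p n)^j := by rw [pow_add]; ring
          _ = 1 - (1 + (p:ZMod (p^n)) * (-r)) := by rw [hm, hj]
          _ = r * (p:ZMod (p^n)) := by ring
      rw [smul_smul, hji, UU_natCast, hbb, smul_smul, hscalar, ← smul_smul]
    ext : 1
    · show g.a = UU p n (-i0) • (ψf (UU p n i0 • aa) + Q p n (i0.val) • a₀)
      rw [smul_add, hUU2, hsc, hga]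
    · show g.i = 0
      exact hgi
  · rintro ⟨x, rfl⟩
    rw [key]
    refine ⟨rfl, UU p n (-x.i) • x.a, UU p n (-x.i) * Q p n (x.i.val), ?_⟩
    show UU p n (-x.i) • (ψf x.a + Q p n (x.i.val) • a₀) = _
    rw [hsmulψ, smul_add, smul_smul]

lemma comm_of_one (hn : n = 1) : ∀ x y : Gr p n, x * y = y * x := by
  subst hn
  intro x y
  have hU : ∀ i : ZMod (p^(1-1)), UU p 1 i = 1 := by
    intro i
    have h2 : i.val < 1 := by simpa using ZMod.val_lt i
    have h0 : i.val = 0 := by omega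
    rw [UU, h0, pow_zero]
  ext : 1
  · rw [mul_a, mul_a, hU, hU, one_smul, one_smul, add_comm]
  · rw [mul_i, mul_i, add_comm]

theorem twisted1 (hn : n = 1) (φ : Gr p n ≃* Gr p n) :
    ∃ H : Subgroup (Gr p n),
      (H : Set (Gr p n)) = {g : Gr p n | ∃ x : Gr p n, g = x⁻¹ * φ x} := by
  have hcomm := comm_of_one p n hn
  have hhom : ∀ a b : Gr p n, (a*b)⁻¹ * φ (a*b) = (a⁻¹ * φ a) * (b⁻¹ * φ b) := by
    intro a b
    rw [map_mul, mul_inv_rev, hcomm b⁻¹ a⁻¹]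
    have h1 : b⁻¹ * (φ a * φ b) = φ a * (b⁻¹ * φ b) := by
      rw [← mul_assoc, hcomm b⁻¹ (φ a), mul_assoc]
    calc a⁻¹ * b⁻¹ * (φ a * φ b) = a⁻¹ * (b⁻¹ * (φ a * φ b)) := by rw [mul_assoc]
      _ = a⁻¹ * (φ a * (b⁻¹ * φ b)) := by rw [h1]
      _ = (a⁻¹ * φ a) * (b⁻¹ * φ b) := by rw [← mul_assoc]
  set F : Gr p n →* Gr p n := MonoidHom.mk' (fun g => g⁻¹ * φ g) hhom with hF
  refine ⟨F.range, ?_⟩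
  ext g
  simp only [MonoidHom.coe_range, Set.mem_range, Set.mem_setOf_eq]
  constructor
  · rintro ⟨x, rfl⟩
    exact ⟨x, rfl⟩
  · rintro ⟨x, h⟩
    exact ⟨x, h.symm⟩

lemma lcs_pred_ne_bot (hn : 1 ≤ n) : (⊤ : Subgroup (Gr p n)).lowerCentralSeries (n-1) ≠ ⊥ := by
  have hp1 : 1 < p := hpf.out.one_lt
  haveI : Fact (1 < p^n) :=
    ⟨lt_of_lt_of_le hp1 (Nat.le_self_pow (by omega) p)⟩
  rcases Nat.lt_or_ge n 2 with h1 | h2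
  · have hn1 : n = 1 := by omega
    subst hn1
    show (⊤ : Subgroup (Gr p 1)).lowerCentralSeries 0 ≠ ⊥
    rw [Subgroup.lowerCentralSeries_zero]
    intro h
    have hmem : (⟨((1:ZMod (p^1)), 0), 0⟩ : Gr p 1) ∈ (⊥ : Subgroup (Gr p 1)) := by
      rw [← h]; trivial
    rw [Subgroup.mem_bot] at hmem
    have := congrArg (fun g : Gr p 1 => (Gr.a g).1) hmem
    simp only [one_a] at this
    exact one_ne_zero this
  · intro h
    have hw : (⟨((p^(n-1) : ℕ) : ZMod (p^n)) • ((1:ZMod (p^n)), (0:ZMod (p^n))), 0⟩ : Gr p n)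
        ∈ HS p n (n-1) := ⟨rfl, ((1:ZMod (p^n)), (0:ZMod (p^n))), rfl⟩
    have hmem := HS_le_lcs p n (n-1) hw
    rw [h, Subgroup.mem_bot] at hmem
    have hcomp := congrArg (fun g : Gr p n => (Gr.a g).1) hmem
    simp only [one_a, rsmul_pair, mul_one] at hcomp
    have hz : ((p^(n-1) : ℕ) : ZMod (p^n)) = 0 := hcomp
    rw [ZMod.natCast_eq_zero_iff] at hz
    have := (Nat.pow_dvd_pow_iff_le_right hp1).1 hz
    omega

end ThmA

/-- The property that for every automorphism `φ` of `G`, the twisted conjugacy class of the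
identity `[G,φ] = {g⁻¹ φ(g) | g ∈ G}` is a subgroup of `G`. -/
def TwistedClassesAreSubgroups (G : Type*) [Group G] : Prop :=
  ∀ φ : G ≃* G, ∃ H : Subgroup G, (H : Set G) = {g : G | ∃ a : G, g = a⁻¹ * φ a}

/-- `G` is a finite `p`-group, nilpotent of class exactly `n`, in which every twisted
conjugacy class of the identity under an automorphism is a subgroup. -/
def IsGoodPGroup (p n : ℕ) (G : Type*) [Group G] : Prop :=
  Finite G ∧ IsPGroup p G ∧
    (⊤ : Subgroup G).lowerCentralSeries n = ⊥ ∧ (⊤ : Subgroup G).lowerCentralSeries (n - 1) ≠ ⊥ ∧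
    TwistedClassesAreSubgroups G

/-- (Theorem A)  For every `n ≥ 1` and every odd prime `p` there exists a finite `p`-group
`G`, nilpotent of class exactly `n`, such that `[G,φ]` is a subgroup for every
automorphism `φ` of `G`. -/
theorem theoremA (n p : ℕ) (hn : 1 ≤ n) (hp : p.Prime) (hodd : Odd p) :
    ∃ (G : Type) (_ : Group G), IsGoodPGroup p n G := by
  haveI := Fact.mk hp
  haveI := Fact.mk hodd
  refine ⟨ThmA.Gr p n, inferInstance, ?_, ?_, ?_, ?_, ?_⟩
  · infer_instance
  · exact ThmA.isPGroup_gr p n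
  · exact ThmA.lcs_n_eq_bot p n hn
  · exact ThmA.lcs_pred_ne_bot p n hn
  · intro φ
    rcases Nat.lt_or_ge n 2 with h1 | h2
    · exact ThmA.twisted1 p n (by omega) φ
    · exact ThmA.twisted2 p n h2 φ
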